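/- Let (φ_i)_{i∈I} be a family of continuous multifunctions from X to nonempty subsets of X which is precompact with respect to the supremum Hausdorff semimetric h_sup(φ,ψ) = sup_x h(φ(x),ψ(x)). Then the pointwise union multifunction x ↦ ⋃_{i∈I} φ_i(x) is continuous with respect to the Hausdorff distance. -/

import Mathlib

theorem union_of_precompact_family_continuous {X : Type*} [MetricSpace X]
    {I : Type*} [Nonempty I] (φ : I → X → Set X)
    (hne : ∀ i x, (φ i x).Nonempty)
    (hcont : ∀ i x₀, ∀ ε > (0 : ℝ), ∃ δ > (0 : ℝ), ∀ x, dist x x₀ < δ →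
      EMetric.hausdorffEdist (φ i x) (φ i x₀) < ENNReal.ofReal ε)
    (hprecompact : ∀ ε > (0 : ℝ), ∃ J : Finset I, J.Nonempty ∧ ∀ i : I, ∃ j ∈ J,
      ∀ x, EMetric.hausdorffEdist (φ i x) (φ j x) < ENNReal.ofReal ε) :
    ∀ x₀, ∀ ε > (0 : ℝ), ∃ δ > (0 : ℝ), ∀ x, dist x x₀ < δ →
      EMetric.hausdorffEdist (⋃ i, φ i x) (⋃ i, φ i x₀) < ENNReal.ofReal ε := by
  intro x₀ ε hε
  have hε4 : (0:ℝ) < ε/4 := by positivity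
  obtain ⟨J, hJne, hJ⟩ := hprecompact (ε/4) hε4
  have hch : ∀ j : I, ∃ δ > (0:ℝ), ∀ x, dist x x₀ < δ →
      EMetric.hausdorffEdist (φ j x) (φ j x₀) < ENNReal.ofReal (ε/4) :=
    fun j => hcont j x₀ (ε/4) hε4
  choose δ hδpos hδ using hch
  refine ⟨J.inf' hJne δ, ?_, ?_⟩
  · exact (Finset.lt_inf'_iff hJne).2 fun j _ => hδpos j
  · intro x hx
    have key : ∀ i : I, EMetric.hausdorffEdist (φ i x) (φ i x₀) ≤ ENNReal.ofReal (3*(ε/4)) := by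
      intro i
      obtain ⟨j, hjJ, hij⟩ := hJ i
      have hx' : dist x x₀ < δ j := lt_of_lt_of_le hx (Finset.inf'_le _ hjJ)
      have h1 : EMetric.hausdorffEdist (φ i x) (φ j x) ≤ ENNReal.ofReal (ε/4) :=
        (hij x).le
      have h2 : EMetric.hausdorffEdist (φ j x) (φ j x₀) ≤ ENNReal.ofReal (ε/4) :=
        (hδ j x hx').le
      have h3 : EMetric.hausdorffEdist (φ j x₀) (φ i x₀) ≤ ENNReal.ofReal (ε/4) := by
        exact EMetric.hausdorffEdist_comm.le.trans (hij x₀).le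
      calc EMetric.hausdorffEdist (φ i x) (φ i x₀)
          ≤ EMetric.hausdorffEdist (φ i x) (φ j x) +
            EMetric.hausdorffEdist (φ j x) (φ i x₀) :=
            EMetric.hausdorffEdist_triangle
        _ ≤ EMetric.hausdorffEdist (φ i x) (φ j x) +
            (EMetric.hausdorffEdist (φ j x) (φ j x₀) +
             EMetric.hausdorffEdist (φ j x₀) (φ i x₀)) := by
            gcongr; exact EMetric.hausdorffEdist_triangle
        _ ≤ ENNReal.ofReal (ε/4) + (ENNReal.ofReal (ε/4) + ENNReal.ofReal (ε/4)) := by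
            gcongr
        _ = ENNReal.ofReal (3*(ε/4)) := by
            rw [← ENNReal.ofReal_add hε4.le hε4.le, ← ENNReal.ofReal_add hε4.le (by positivity)]
            ring_nf
    have hle : EMetric.hausdorffEdist (⋃ i, φ i x) (⋃ i, φ i x₀)
        ≤ ENNReal.ofReal (3*(ε/4)) := by
      apply EMetric.hausdorffEdist_le_of_infEdist
      · intro a ha
        obtain ⟨_, ⟨i, rfl⟩, hai⟩ := ha
        calc EMetric.infEdist a (⋃ i, φ i x₀)
            ≤ EMetric.infEdist a (φ i x₀) :=
              EMetric.infEdist_anti (Set.subset_iUnion (fun i => φ i x₀) i)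
          _ ≤ EMetric.hausdorffEdist (φ i x) (φ i x₀) :=
              EMetric.infEdist_le_hausdorffEdist_of_mem hai
          _ ≤ _ := key i
      · intro a ha
        obtain ⟨_, ⟨i, rfl⟩, hai⟩ := ha
        calc EMetric.infEdist a (⋃ i, φ i x)
            ≤ EMetric.infEdist a (φ i x) :=
              EMetric.infEdist_anti (Set.subset_iUnion (fun i => φ i x) i)
          _ ≤ EMetric.hausdorffEdist (φ i x₀) (φ i x) :=
              EMetric.infEdist_le_hausdorffEdist_of_mem hai
          _ = EMetric.hausdorffEdist (φ i x) (φ i x₀) := EMetric.hausdorffEdist_comm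
          _ ≤ _ := key i
    exact lt_of_le_of_lt hle (ENNReal.ofReal_lt_ofReal_iff hε |>.2 (by linarith))
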